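/- arXiv:2403.01672 — 5 statements merged into one kernel-verified Lean document; each statement's English description precedes it below -/
import Mathlib

section
/- Let H be a real Hilbert space, A a closed linear subspace of H with orthogonal projection P_A, (g_k)_{k∈Z} a family of pairwise orthogonal nonzero vectors of H, and s = (s_k)_{k∈Z} real numbers such that A_s := A ∩ H_s is nonempty, where H_s := {v ∈ H : ⟨v, g_k⟩ = s_k for all k ∈ Z}. Let P_{H_s} be the orthogonal projection (nearest-point map) onto the nonempty closed affine set H_s. Let (λ_n)_{n≥0} be a sequence in [0,2] with Σ_{n≥0} λ_n(2 − λ_n) = +∞. Then for any u⁽⁰⁾ ∈ A, the relaxed POCS iteration u⁽ⁿ⁺¹⁾ := P_A( u⁽ⁿ⁾ + λ_n (P_{H_s} u⁽ⁿ⁾ − u⁽ⁿ⁾) ) converges in norm to the unique nearest point of A_s to u⁽⁰⁾. -/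
open RealInnerProductSpace

section Core
variable {H : Type*} [NormedAddCommGroup H] [InnerProductSpace ℝ H]

lemma sub_orthogonalProjection_mem_orthogonal {K : Submodule ℝ H} [K.HasOrthogonalProjection]
    (v : H) : v - (Submodule.orthogonalProjectionOnto K v : H) ∈ Kᗮ :=
  K.sub_starProjection_mem_orthogonal v

lemma orthogonalProjection_eq_self_iff {K : Submodule ℝ H} [K.HasOrthogonalProjection] {v : H} :
    (Submodule.orthogonalProjectionOnto K v : H) = v ↔ v ∈ K :=
  K.starProjection_eq_self_iff

lemma inner_orthogonalProjection_left_eq_right (K : Submodule ℝ H) [K.HasOrthogonalProjection]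
    (u v : H) : ⟪(Submodule.orthogonalProjectionOnto K u : H), v⟫ =
      ⟪u, (Submodule.orthogonalProjectionOnto K v : H)⟫ :=
  K.inner_starProjection_left_eq_right u v

/-- The orthogonal projection onto a complete subspace, as a map `H →L[ℝ] H`. -/
noncomputable def projCLM (K : Submodule ℝ H) [CompleteSpace K] : H →L[ℝ] H :=
  K.subtypeL.comp (Submodule.orthogonalProjectionOnto K)

@[simp] lemma projCLM_apply (K : Submodule ℝ H) [CompleteSpace K] (x : H) :
    projCLM K x = (Submodule.orthogonalProjectionOnto K x : H) := rfl

/-- The composite operator `P_A (I - P_M) P_A`. -/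
noncomputable def Gop (A M : Submodule ℝ H) [CompleteSpace A] [CompleteSpace M] : H →L[ℝ] H :=
  (projCLM A).comp (((ContinuousLinearMap.id ℝ H) - projCLM M).comp (projCLM A))

lemma Gop_apply (A M : Submodule ℝ H) [CompleteSpace A] [CompleteSpace M] (x : H) :
    Gop A M x = (Submodule.orthogonalProjectionOnto A
      ((Submodule.orthogonalProjectionOnto A x : H) -
        (Submodule.orthogonalProjectionOnto M (Submodule.orthogonalProjectionOnto A x : H) : H)) : H) := by
  simp [Gop, ContinuousLinearMap.comp_apply, ContinuousLinearMap.sub_apply]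

/-- Norm contraction of orthogonal projection, per vector. -/
lemma proj_norm_le (K : Submodule ℝ H) [CompleteSpace K] (z : H) :
    ‖(Submodule.orthogonalProjectionOnto K z : H)‖ ≤ ‖z‖ := by
  calc ‖(Submodule.orthogonalProjectionOnto K z : H)‖ = ‖Submodule.orthogonalProjectionOnto K z‖ := rfl
    _ ≤ ‖Submodule.orthogonalProjectionOnto K‖ * ‖z‖ := (Submodule.orthogonalProjectionOnto K).le_opNorm z
    _ ≤ 1 * ‖z‖ := mul_le_mul_of_nonneg_right (Submodule.orthogonalProjectionOnto_norm_le K) (norm_nonneg z)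
    _ = ‖z‖ := one_mul _

lemma proj_sub_norm_le (K : Submodule ℝ H) [CompleteSpace K] (z : H) :
    ‖z - (Submodule.orthogonalProjectionOnto K z : H)‖ ≤ ‖z‖ := by
  have h0 : ⟪(Submodule.orthogonalProjectionOnto K z : H), z - (Submodule.orthogonalProjectionOnto K z : H)⟫ = 0 := by
    have hm := sub_orthogonalProjection_mem_orthogonal (K := K) z
    have := (Submodule.mem_orthogonal' K _).mp hm _ (Submodule.orthogonalProjectionOnto K z).2
    rw [real_inner_comm] at this; exact this
  have := norm_add_sq_real (Submodule.orthogonalProjectionOnto K z : H) (z - (Submodule.orthogonalProjectionOnto K z : H))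
  rw [h0] at this
  simp only [add_sub_cancel] at this
  nlinarith [norm_nonneg z, norm_nonneg (z - (Submodule.orthogonalProjectionOnto K z : H)),
    sq_nonneg ‖(Submodule.orthogonalProjectionOnto K z : H)‖]
end Core

section Core2
variable {H : Type*} [NormedAddCommGroup H] [InnerProductSpace ℝ H] [CompleteSpace H]

set_option maxHeartbeats 1000000 in
theorem pocs_core (A M : Submodule ℝ H) [CompleteSpace A] [CompleteSpace M]
    (lam : ℕ → ℝ) (hlam : ∀ n, lam n ∈ Set.Icc (0:ℝ) 2)
    (hdiv : ¬ Summable (fun n => lam n * (2 - lam n)))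
    (v : ℕ → H) (hv0 : v 0 ∈ A)
    (hrec : ∀ n, v (n+1) = v n - lam n •
      (Submodule.orthogonalProjectionOnto A (v n - (Submodule.orthogonalProjectionOnto M (v n) : H)) : H)) :
    ∃ c : H, c ∈ A ∧ c ∈ M ∧ ((v 0 - c) ∈ (A ⊓ M)ᗮ) ∧
      Filter.Tendsto v Filter.atTop (nhds c) := by
  set G : H →L[ℝ] H := Gop A M with hGdef
  set Qf : H → H := fun z => z - (Submodule.orthogonalProjectionOnto M z : H) with hQdef
  set Rf : H → H := fun x => Qf (Submodule.orthogonalProjectionOnto A x : H) with hRdef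
  have hGapp : ∀ x, G x = (Submodule.orthogonalProjectionOnto A (Rf x) : H) := fun x => Gop_apply A M x
  have hGA : ∀ x, G x ∈ A := by intro x; rw [hGapp]; exact SetLike.coe_mem _
  have hQorth : ∀ z, Qf z ∈ Mᗮ := fun z => sub_orthogonalProjection_mem_orthogonal _
  have hQle : ∀ z, ‖Qf z‖ ≤ ‖z‖ := fun z => proj_sub_norm_le M z
  have hRle : ∀ x, ‖Rf x‖ ≤ ‖x‖ :=
    fun x => le_trans (hQle _) (proj_norm_le A x)
  have hprojA : ∀ x, x ∈ A → (Submodule.orthogonalProjectionOnto A x : H) = x :=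
    fun x hx => orthogonalProjection_eq_self_iff.mpr hx
  have hRAM : ∀ x, x ∈ A → x ∈ M → Rf x = 0 := by
    intro x hxA hxM
    simp only [hRdef, hQdef, hprojA x hxA, orthogonalProjection_eq_self_iff.mpr hxM, sub_self]
  have hQinner : ∀ z w, ⟪Qf z, w⟫ = ⟪Qf z, Qf w⟫ := by
    intro z w
    have h1 : ⟪Qf z, w - Qf w⟫ = 0 := by
      have hw : w - Qf w = (Submodule.orthogonalProjectionOnto M w : H) := by simp only [hQdef]; abel
      rw [hw]
      exact (Submodule.mem_orthogonal' M _).mp (hQorth z) _ (SetLike.coe_mem _)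
    rw [inner_sub_right] at h1
    linarith
  have hGB : ∀ x y, ⟪G x, y⟫ = ⟪Rf x, Rf y⟫ := by
    intro x y
    calc ⟪G x, y⟫ = ⟪(Submodule.orthogonalProjectionOnto A (Rf x) : H), y⟫ := by rw [hGapp]
      _ = ⟪Rf x, (Submodule.orthogonalProjectionOnto A y : H)⟫ :=
          inner_orthogonalProjection_left_eq_right A _ y
      _ = ⟪Qf (Submodule.orthogonalProjectionOnto A x : H), (Submodule.orthogonalProjectionOnto A y : H)⟫ := by
          rw [hRdef]
      _ = ⟪Qf (Submodule.orthogonalProjectionOnto A x : H), Qf (Submodule.orthogonalProjectionOnto A y : H)⟫ :=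
          hQinner _ _
      _ = ⟪Rf x, Rf y⟫ := by rw [hRdef]
  have hGxx : ∀ x, ⟪G x, x⟫ = ‖Rf x‖ ^ 2 := by
    intro x; rw [hGB]; exact real_inner_self_eq_norm_sq _
  have hGpos : ∀ x, 0 ≤ ⟪G x, x⟫ := by intro x; rw [hGxx]; positivity
  have hGnormsq : ∀ x, ‖G x‖ ^ 2 ≤ ⟪G x, x⟫ := by
    intro x
    rw [hGxx]
    have h1 : ‖G x‖ ≤ ‖Rf x‖ := by rw [hGapp]; exact proj_norm_le A _
    exact pow_le_pow_left₀ (norm_nonneg _) h1 2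
  have hstep : ∀ t : ℝ, t ∈ Set.Icc (0:ℝ) 2 → ∀ x : H,
      ‖x - t • G x‖ ^ 2 ≤ ‖x‖ ^ 2 - t * (2 - t) * ⟪G x, x⟫ := by
    intro t ht x
    have h1 := norm_sub_sq_real x (t • G x)
    have h2 : ⟪x, t • G x⟫ = t * ⟪G x, x⟫ := by
      rw [real_inner_smul_right, real_inner_comm]
    have h3 : ‖t • G x‖ ^ 2 = t ^ 2 * ‖G x‖ ^ 2 := by
      rw [norm_smul, mul_pow, Real.norm_eq_abs, sq_abs]
    nlinarith [hGnormsq x, hGpos x, sq_nonneg t, ht.1, ht.2]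
  have hcontract : ∀ tt : ℝ, tt ∈ Set.Icc (0:ℝ) 2 → ∀ y : H, ‖y - tt • G y‖ ≤ ‖y‖ := by
    intro tt htt y
    have h1 := hstep tt htt y
    have h2 : 0 ≤ tt * (2 - tt) * ⟪G y, y⟫ :=
      mul_nonneg (by nlinarith [htt.1, htt.2]) (hGpos y)
    nlinarith [norm_nonneg (y - tt • G y), norm_nonneg y]
  have hmono : ∀ t : ℝ, t ∈ Set.Icc (0:ℝ) 2 → ∀ x : H,
      ⟪G (x - t • G x), x - t • G x⟫ ≤ ⟪G x, x⟫ := by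
    intro t ht x
    have e1 : G (x - t • G x) = G x - t • G (G x) := by rw [map_sub, map_smul]
    have e2 : ⟪G x - t • G (G x), x - t • G x⟫ =
        ⟪G x, x⟫ - t * ⟪G x, G x⟫ - t * ⟪G (G x), x⟫ + t * (t * ⟪G (G x), G x⟫) := by
      simp only [inner_sub_left, inner_sub_right, real_inner_smul_left, real_inner_smul_right]
      ring
    have e3 : ⟪G (G x), x⟫ = ⟪G x, G x⟫ := by
      rw [hGB (G x) x, hGB x (G x), real_inner_comm]
    have e4 : ⟪G (G x), G x⟫ ≤ ⟪G x, G x⟫ := by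
      rw [hGxx (G x), real_inner_self_eq_norm_sq]
      exact pow_le_pow_left₀ (norm_nonneg _) (hRle _) 2
    have e5 : (0:ℝ) ≤ ⟪G x, G x⟫ := real_inner_self_nonneg
    have p1 : t * (t * ⟪G (G x), G x⟫) ≤ t * (t * ⟪G x, G x⟫) := by
      have := mul_le_mul_of_nonneg_left e4 (sq_nonneg t)
      nlinarith [sq_nonneg t]
    have p2 : 0 ≤ (2 * t - t * t) * ⟪G x, G x⟫ :=
      mul_nonneg (by nlinarith [ht.1, ht.2]) e5
    rw [e1, e2, e3]
    nlinarith
  -- recursion in terms of G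
  have hvA : ∀ n, v n ∈ A := by
    intro n
    induction n with
    | zero => exact hv0
    | succ n ih =>
      rw [hrec n]
      exact A.sub_mem ih (A.smul_mem _ (SetLike.coe_mem _))
  have hvrec : ∀ n, v (n+1) = v n - lam n • G (v n) := by
    intro n
    rw [hrec n]
    have h1 : G (v n) =
        (Submodule.orthogonalProjectionOnto A (v n - (Submodule.orthogonalProjectionOnto M (v n) : H)) : H) := by
      rw [hGapp, hRdef]
      simp only [hQdef, hprojA _ (hvA n)]
    rw [h1]
  -- the projection point
  have hAc : IsClosed (A : Set H) :=
    (completeSpace_coe_iff_isComplete.mp ‹CompleteSpace A›).isClosed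
  have hMc : IsClosed (M : Set H) :=
    (completeSpace_coe_iff_isComplete.mp ‹CompleteSpace M›).isClosed
  have hCc : IsClosed ((A ⊓ M : Submodule ℝ H) : Set H) := by
    rw [Submodule.coe_inf]; exact hAc.inter hMc
  haveI : CompleteSpace (A ⊓ M : Submodule ℝ H) := hCc.completeSpace_coe
  set c : H := (Submodule.orthogonalProjectionOnto (A ⊓ M) (v 0) : H) with hcdef
  have hcC : c ∈ A ⊓ M := SetLike.coe_mem _
  have hGc : G c = 0 := by
    rw [hGapp, hRAM c hcC.1 hcC.2]
    simp
  have hwrec : ∀ n, v (n+1) - c = (v n - c) - lam n • G (v n - c) := by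
    intro n
    have h1 : G (v n - c) = G (v n) - G c := map_sub G (v n) c
    rw [hvrec n, h1, hGc, sub_zero]
    abel
  have hworth : v 0 - c ∈ (A ⊓ M)ᗮ := sub_orthogonalProjection_mem_orthogonal (v 0)
  -- kernel orthogonality
  have hRzero : ∀ x : H, ⟪G x, x⟫ = 0 → Rf x = 0 := by
    intro x hx
    have h1 : ‖Rf x‖ ^ 2 = 0 := by rw [← hGxx]; exact hx
    exact norm_eq_zero.mp (sq_eq_zero_iff.mp h1)
  have hker : ∀ x : H, G x = 0 → ⟪v 0 - c, x⟫ = 0 := by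
    intro x hx
    have hR0 : Rf x = 0 := by
      apply hRzero
      rw [hx, inner_zero_left]
    have hPAxM : (Submodule.orthogonalProjectionOnto A x : H) ∈ M := by
      have h2 : (Submodule.orthogonalProjectionOnto A x : H) =
          (Submodule.orthogonalProjectionOnto M (Submodule.orthogonalProjectionOnto A x : H) : H) := by
        have h1 : Qf (Submodule.orthogonalProjectionOnto A x : H) = 0 := hR0
        simp only [hQdef] at h1
        rw [sub_eq_zero] at h1
        exact h1
      rw [h2]; exact SetLike.coe_mem _
    have hx1 : ⟪v 0 - c, x - (Submodule.orthogonalProjectionOnto A x : H)⟫ = 0 := by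
      have hm : x - (Submodule.orthogonalProjectionOnto A x : H) ∈ Aᗮ :=
        sub_orthogonalProjection_mem_orthogonal x
      have hva : v 0 - c ∈ A := A.sub_mem hv0 hcC.1
      exact (Submodule.mem_orthogonal A _).mp hm _ hva
    have hx2 : ⟪v 0 - c, (Submodule.orthogonalProjectionOnto A x : H)⟫ = 0 :=
      (Submodule.mem_orthogonal' _ _).mp hworth _
        (Submodule.mem_inf.mpr ⟨SetLike.coe_mem _, hPAxM⟩)
    have h3 : ⟪v 0 - c, (x - (Submodule.orthogonalProjectionOnto A x : H)) +
        (Submodule.orthogonalProjectionOnto A x : H)⟫ = 0 := by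
      rw [inner_add_right, hx1, hx2, add_zero]
    simpa using h3
  clear hGdef hQdef hRdef hcdef
  clear_value G Qf Rf c
  -- density: v 0 - c is in the closure of the range of G
  have happrox : ∀ ε : ℝ, 0 < ε → ∃ z : H, ‖(v 0 - c) - G z‖ < ε := by
    intro ε hε
    have hmem2 : v 0 - c ∈ (LinearMap.range (G : H →ₗ[ℝ] H))ᗮᗮ := by
      rw [Submodule.mem_orthogonal]
      intro y hy
      have hGy : G y = 0 := by
        have h0 : ⟪G y, y⟫ = 0 :=
          (Submodule.mem_orthogonal _ _).mp hy _ (LinearMap.mem_range_self _ y)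
        rw [hGapp, hRzero y h0]
        simp
      rw [real_inner_comm]
      exact hker y hGy
    rw [Submodule.orthogonal_orthogonal_eq_closure] at hmem2
    have hmem3 : v 0 - c ∈ closure ((LinearMap.range (G : H →ₗ[ℝ] H) : Submodule ℝ H) : Set H) := by
      rw [← Submodule.topologicalClosure_coe]; exact hmem2
    rw [Metric.mem_closure_iff] at hmem3
    obtain ⟨b, hb, hdist⟩ := hmem3 ε hε
    obtain ⟨z, rfl⟩ := hb
    exact ⟨z, by rwa [dist_eq_norm] at hdist⟩
  -- main convergence
  have hw0 : Filter.Tendsto (fun n => v n - c) Filter.atTop (nhds 0) := by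
    rw [NormedAddCommGroup.tendsto_nhds_zero]
    intro ε hε
    obtain ⟨z, hz⟩ := happrox (ε/2) (by positivity)
    obtain ⟨x, hx0, hxs⟩ : ∃ x : ℕ → H, x 0 = z ∧ ∀ n, x (n+1) = x n - lam n • G (x n) :=
      ⟨fun n => Nat.rec z (fun n xn => xn - lam n • G xn) n, rfl, fun n => rfl⟩
    set t : ℕ → ℝ := fun n => ⟪G (x n), x n⟫ with htdef
    have ht0 : ∀ n, 0 ≤ t n := fun n => hGpos (x n)
    have htmono : ∀ n, t (n+1) ≤ t n := by
      intro n
      have h1 := hmono (lam n) (hlam n) (x n)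
      rw [← hxs n] at h1
      exact h1
    have htanti : Antitone t := antitone_nat_of_succ_le htmono
    have hlampos : ∀ n, 0 ≤ lam n * (2 - lam n) := by
      intro n; nlinarith [(hlam n).1, (hlam n).2]
    have hsum : ∀ n, ∑ k ∈ Finset.range n, lam k * (2 - lam k) * t k ≤ ‖z‖ ^ 2 := by
      have key : ∀ n, ∑ k ∈ Finset.range n, lam k * (2 - lam k) * t k + ‖x n‖ ^ 2 ≤
          ‖z‖ ^ 2 := by
        intro n
        induction n with
        | zero => simp [hx0]
        | succ n ih =>
          rw [Finset.sum_range_succ]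
          have h1 := hstep (lam n) (hlam n) (x n)
          rw [← hxs n] at h1
          linarith
      intro n
      have h2 := key n
      nlinarith [sq_nonneg ‖x n‖]
    have hsmall : ∃ N, t N < (ε/2) ^ 2 := by
      by_contra hcon
      push_neg at hcon
      apply hdiv
      apply summable_of_sum_range_le (c := ‖z‖ ^ 2 / (ε/2) ^ 2) hlampos
      intro n
      have hb : ∀ k ∈ Finset.range n,
          lam k * (2 - lam k) * (ε/2) ^ 2 ≤ lam k * (2 - lam k) * t k := by
        intro k _
        exact mul_le_mul_of_nonneg_left (hcon k) (hlampos k)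
      have h2 := (Finset.sum_le_sum hb).trans (hsum n)
      rw [← Finset.sum_mul] at h2
      rw [le_div_iff₀ (by positivity)]
      exact h2
    obtain ⟨N, hN⟩ := hsmall
    filter_upwards [Filter.eventually_ge_atTop N] with n hn
    have hGxn : ‖G (x n)‖ < ε/2 := by
      have h1 : ‖G (x n)‖ ^ 2 ≤ t n := hGnormsq (x n)
      have h2 : ‖G (x n)‖ ^ 2 < (ε/2) ^ 2 := lt_of_le_of_lt (h1.trans (htanti hn)) hN
      exact lt_of_pow_lt_pow_left₀ 2 (by positivity) h2
    have herr : ∀ m, ‖(v m - c) - G (x m)‖ ≤ ‖(v 0 - c) - G z‖ := by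
      intro m
      induction m with
      | zero => rw [hx0]
      | succ m ih =>
        have e1 : (v (m+1) - c) - G (x (m+1)) =
            ((v m - c) - G (x m)) - lam m • G ((v m - c) - G (x m)) := by
          rw [hwrec m, hxs m]
          simp only [map_sub, map_smul, smul_sub]
          abel
        rw [e1]
        exact (hcontract (lam m) (hlam m) _).trans ih
    have h4 : ‖v n - c‖ ≤ ‖(v n - c) - G (x n)‖ + ‖G (x n)‖ := by
      have h5 := norm_add_le ((v n - c) - G (x n)) (G (x n))
      simpa using h5
    have h6 := herr n
    linarith
  refine ⟨c, hcC.1, hcC.2, hworth, ?_⟩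
  have h7 : Filter.Tendsto (fun n => (v n - c) + c) Filter.atTop (nhds (0 + c)) :=
    hw0.add tendsto_const_nhds
  simpa using h7
end Core2

set_option maxHeartbeats 1000000 in
set_option synthInstance.maxHeartbeats 200000 in
/-- Relaxed POCS iteration alternating the nearest-point projection
onto the closed affine consistency set `H_s` (for pairwise orthogonal nonzero
sampling kernels) and the orthogonal projection onto a closed subspace `A`,
with relaxation coefficients `λ_n ∈ [0,2]` satisfying `Σ λ_n (2 - λ_n) = ∞`,
converges in norm to the unique nearest point of `A_s = A ∩ H_s` to `u 0`. -/
theorem relaxed_POCS_converges_to_nearest_consistent_point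
    {H : Type*} [NormedAddCommGroup H] [InnerProductSpace ℝ H] [CompleteSpace H]
    {Z : Type*} (A : Submodule ℝ H) [CompleteSpace A]
    (g : Z → H) (hg : ∀ k j : Z, k ≠ j → ⟪g k, g j⟫ = 0) (hg0 : ∀ k : Z, g k ≠ 0)
    (s : Z → ℝ)
    (Hs : Set H) (hHs : Hs = {v : H | ∀ k : Z, ⟪v, g k⟫ = s k})
    (hAs : ∃ a, a ∈ A ∧ a ∈ Hs)
    (P : H → H) (hP : ∀ v : H, P v ∈ Hs ∧ ∀ y ∈ Hs, ‖v - P v‖ ≤ ‖v - y‖)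
    (lam : ℕ → ℝ) (hlam : ∀ n, lam n ∈ Set.Icc (0:ℝ) 2)
    (hdiv : ¬ Summable (fun n => lam n * (2 - lam n)))
    (u : ℕ → H) (hu0 : u 0 ∈ A)
    (hrec : ∀ n, u (n+1) =
      (Submodule.orthogonalProjectionOnto A (u n + lam n • (P (u n) - u n)) : H)) :
    ∃ y : H, (y ∈ A ∧ y ∈ Hs) ∧
      (∀ v : H, v ∈ A ∧ v ∈ Hs → v ≠ y → ‖u 0 - y‖ < ‖u 0 - v‖) ∧
      Filter.Tendsto u Filter.atTop (nhds y) := by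
  obtain ⟨a, haA, haHs⟩ := hAs
  set M : Submodule ℝ H := (Submodule.span ℝ (Set.range g))ᗮ with hMdef
  haveI : CompleteSpace M := by rw [hMdef]; infer_instance
  haveI : Submodule.HasOrthogonalProjection M := by infer_instance
  have hMmem : ∀ x : H, x ∈ M ↔ ∀ k, ⟪x, g k⟫ = 0 := by
    intro x
    constructor
    · intro hx k
      exact (Submodule.mem_orthogonal' _ _).mp hx _ (Submodule.subset_span ⟨k, rfl⟩)
    · intro hx
      rw [hMdef, Submodule.mem_orthogonal']
      intro u hu
      induction hu using Submodule.span_induction with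
      | mem y hy => obtain ⟨k, rfl⟩ := hy; exact hx k
      | zero => exact inner_zero_right x
      | add y z hy hz hy' hz' => rw [inner_add_right, hy', hz', add_zero]
      | smul r y hy hy' => rw [real_inner_smul_right, hy', mul_zero]
  have hHsmem : ∀ x : H, x ∈ Hs ↔ ∀ k, ⟪x, g k⟫ = s k := by
    intro x; rw [hHs]; exact Iff.rfl
  have haM : ∀ x : H, x ∈ Hs ↔ x - a ∈ M := by
    intro x
    constructor
    · intro hx
      rw [hMmem]
      intro k
      rw [inner_sub_left, (hHsmem x).mp hx k, (hHsmem a).mp haHs k, sub_self]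
    · intro hx
      rw [hHsmem]
      intro k
      have h1 := (hMmem _).mp hx k
      rw [inner_sub_left] at h1
      have h2 := (hHsmem a).mp haHs k
      linarith
  have hPeq : ∀ x : H, P x = a + (Submodule.orthogonalProjectionOnto M (x - a) : H) := by
    intro x
    set m : H := (Submodule.orthogonalProjectionOnto M (x - a) : H) with hm
    have hmM : m ∈ M := SetLike.coe_mem _
    have hy0 : a + m ∈ Hs := (haM _).mpr (by simpa using hmM)
    have hle : ‖x - P x‖ ≤ ‖x - (a + m)‖ := (hP x).2 _ hy0
    have hq : P x - a ∈ M := (haM _).mp (hP x).1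
    have horth : ⟪(x - a) - m, m - (P x - a)⟫ = 0 := by
      have h1 : (x - a) - m ∈ Mᗮ := sub_orthogonalProjection_mem_orthogonal _
      exact (Submodule.mem_orthogonal' M _).mp h1 _ (M.sub_mem hmM hq)
    have hpyth := norm_add_sq_real ((x - a) - m) (m - (P x - a))
    rw [horth] at hpyth
    have he1 : ((x - a) - m) + (m - (P x - a)) = x - P x := by abel
    rw [he1] at hpyth
    have he2 : x - (a + m) = (x - a) - m := by abel
    rw [he2] at hle
    have h5 : ‖m - (P x - a)‖ = 0 := by
      nlinarith [norm_nonneg (m - (P x - a)), norm_nonneg (x - P x),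
        norm_nonneg ((x - a) - m)]
    have h4 : m - (P x - a) = 0 := norm_eq_zero.mp h5
    have h6 : P x - a = m := by
      rw [sub_eq_zero] at h4; exact h4.symm
    rw [← h6]; abel
  have huA : ∀ n, u n ∈ A := by
    intro n
    cases n with
    | zero => exact hu0
    | succ n => rw [hrec n]; exact SetLike.coe_mem _
  have hvrec : ∀ n, u (n+1) - a = (u n - a) - lam n •
      (Submodule.orthogonalProjectionOnto A ((u n - a) -
        (Submodule.orthogonalProjectionOnto M (u n - a) : H)) : H) := by
    intro n
    rw [hrec n, hPeq (u n)]
    have e1 : u n + lam n • ((a + (Submodule.orthogonalProjectionOnto M (u n - a) : H)) - u n)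
        = u n - lam n • ((u n - a) - (Submodule.orthogonalProjectionOnto M (u n - a) : H)) := by
      module
    rw [e1]
    have e2 : (Submodule.orthogonalProjectionOnto A (u n - lam n • ((u n - a) -
          (Submodule.orthogonalProjectionOnto M (u n - a) : H))) : H)
        = (Submodule.orthogonalProjectionOnto A (u n) : H) - lam n •
          (Submodule.orthogonalProjectionOnto A ((u n - a) -
            (Submodule.orthogonalProjectionOnto M (u n - a) : H)) : H) := by
      rw [map_sub, map_smul]
      simp
    rw [e2, orthogonalProjection_eq_self_iff.mpr (huA n)]
    abel
  obtain ⟨c, hcA, hcM, hcorth, hctend⟩ :=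
    pocs_core A M lam hlam hdiv (fun n => u n - a) (A.sub_mem hu0 haA) hvrec
  refine ⟨a + c, ⟨A.add_mem haA hcA, ?_⟩, ?_, ?_⟩
  · exact (haM _).mpr (by simpa using hcM)
  · rintro v ⟨hvA, hvHs⟩ hne
    have hm : v - (a + c) ∈ A ⊓ M := by
      refine Submodule.mem_inf.mpr ⟨A.sub_mem hvA (A.add_mem haA hcA), ?_⟩
      have : v - (a + c) = (v - a) - c := by abel
      rw [this]
      exact M.sub_mem ((haM v).mp hvHs) hcM
    have hmne : v - (a + c) ≠ 0 := sub_ne_zero.mpr hne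
    have horth2 : ⟪u 0 - a - c, v - (a + c)⟫ = 0 :=
      (Submodule.mem_orthogonal' _ _).mp hcorth _ hm
    have hpyth := norm_sub_sq_real (u 0 - a - c) (v - (a + c))
    rw [horth2] at hpyth
    have he : (u 0 - a - c) - (v - (a + c)) = u 0 - v := by abel
    rw [he] at hpyth
    have he2 : u 0 - (a + c) = u 0 - a - c := by abel
    rw [he2]
    have hpos : 0 < ‖v - (a + c)‖ := norm_pos_iff.mpr hmne
    nlinarith [norm_nonneg (u 0 - v), norm_nonneg (u 0 - a - c)]
  · have h8 : Filter.Tendsto (fun n => (u n - a) + a) Filter.atTop (nhds (c + a)) :=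
      hctend.add tendsto_const_nhds
    simp only [sub_add_cancel] at h8
    have : c + a = a + c := add_comm c a
    rwa [this] at h8
end

section
/- Let E and F be real Hilbert spaces, S : E → F a continuous linear map, S* its adjoint, N := (ker S)^⊥ assumed nonzero, B := sup{ ‖Su‖/‖u‖ : u ∈ N, u ≠ 0 } and γ := inf{ ‖Su‖/‖u‖ : u ∈ N, u ≠ 0 }. For s ∈ F and λ ∈ ℝ, define R u := u + λ S*(s − Su) and c_λ := max( |1 − λB²| , |1 − λγ²| ). Then for all v, w ∈ N, ‖R v − R w‖ ≤ c_λ ‖v − w‖. -/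
open scoped RealInnerProductSpace


set_option maxHeartbeats 1000000 in
/-- On `N := (ker S)ᗮ` (assumed nonzero), with
`B := sup ‖S u‖/‖u‖` and `γ := inf ‖S u‖/‖u‖` over nonzero `u ∈ N`, the map
`R u = u + λ S* (s - S u)` satisfies the Lipschitz bound
`‖R v - R w‖ ≤ max (|1 - λB²|) (|1 - λγ²|) ‖v - w‖` on `N`. -/
theorem frame_iteration_lipschitz_bound
    {E F : Type*} [NormedAddCommGroup E] [InnerProductSpace ℝ E] [CompleteSpace E]
    [NormedAddCommGroup F] [InnerProductSpace ℝ F] [CompleteSpace F]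
    (S : E →L[ℝ] F) (s : F) (lam : ℝ)
    (N : Submodule ℝ E) (hN : N = (LinearMap.ker (S : E →ₗ[ℝ] F))ᗮ) (hN0 : N ≠ ⊥)
    (B γ : ℝ)
    (hB : B = sSup {r : ℝ | ∃ u ∈ N, u ≠ 0 ∧ r = ‖S u‖ / ‖u‖})
    (hγ : γ = sInf {r : ℝ | ∃ u ∈ N, u ≠ 0 ∧ r = ‖S u‖ / ‖u‖}) :
    ∀ v ∈ N, ∀ w ∈ N,
      ‖(v + lam • (ContinuousLinearMap.adjoint S) (s - S v)) -
          (w + lam • (ContinuousLinearMap.adjoint S) (s - S w))‖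
        ≤ max |1 - lam * B ^ 2| |1 - lam * γ ^ 2| * ‖v - w‖ := by
  classical
  set K : Set ℝ := {r : ℝ | ∃ u ∈ N, u ≠ 0 ∧ r = ‖S u‖ / ‖u‖} with hK
  set c : ℝ := max |1 - lam * B ^ 2| |1 - lam * γ ^ 2| with hc
  -- basic facts on K
  obtain ⟨u0, hu0N, hu00⟩ := Submodule.ne_bot_iff N |>.mp hN0
  have hKne : K.Nonempty := ⟨‖S u0‖ / ‖u0‖, u0, hu0N, hu00, rfl⟩
  have hbddA : BddAbove K := by
    refine ⟨‖S‖, fun r hr => ?_⟩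
    obtain ⟨u, hu, hu0, rfl⟩ := hr
    rw [div_le_iff₀ (norm_pos_iff.mpr hu0)]
    exact S.le_opNorm u
  have hbddB : BddBelow K := by
    refine ⟨0, fun r hr => ?_⟩
    obtain ⟨u, hu, hu0, rfl⟩ := hr
    positivity
  have hγ0 : 0 ≤ γ := by
    rw [hγ]
    exact le_csInf hKne (fun r hr => by obtain ⟨u, hu, hu0, rfl⟩ := hr; positivity)
  have hlow : ∀ x ∈ N, γ * ‖x‖ ≤ ‖S x‖ := by
    intro x hx
    rcases eq_or_ne x 0 with rfl | hx0
    · simp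
    · have h1 : γ ≤ ‖S x‖ / ‖x‖ := hγ ▸ csInf_le hbddB ⟨x, hx, hx0, rfl⟩
      rw [le_div_iff₀ (norm_pos_iff.mpr hx0)] at h1
      exact h1
  have hup : ∀ x ∈ N, ‖S x‖ ≤ B * ‖x‖ := by
    intro x hx
    rcases eq_or_ne x 0 with rfl | hx0
    · simp
    · have h1 : ‖S x‖ / ‖x‖ ≤ B := hB ▸ le_csSup hbddA ⟨x, hx, hx0, rfl⟩
      rw [div_le_iff₀ (norm_pos_iff.mpr hx0)] at h1
      exact h1
  -- the operator T
  set T : E →L[ℝ] E :=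
    ContinuousLinearMap.id ℝ E - lam • ((ContinuousLinearMap.adjoint S).comp S) with hT
  have hTapp : ∀ x : E, T x = x - lam • (ContinuousLinearMap.adjoint S) (S x) := by
    intro x; simp [hT]
  clear hT
  clear_value T
  -- T maps N to N
  have hTmem : ∀ x ∈ N, T x ∈ N := by
    intro x hx
    rw [hTapp]
    refine Submodule.sub_mem N hx (Submodule.smul_mem N lam ?_)
    rw [hN]
    intro k hk
    rw [ContinuousLinearMap.adjoint_inner_right]
    have hk0 : S k = 0 := LinearMap.mem_ker.mp hk
    simp [hk0]
  -- symmetry of T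
  have hsym : ∀ x y : E, (inner ℝ (T x) (y) : ℝ) = (inner ℝ (x) (T y) : ℝ) := by
    intro x y
    rw [hTapp, hTapp]
    rw [inner_sub_left, inner_sub_right, real_inner_smul_left, real_inner_smul_right,
      ContinuousLinearMap.adjoint_inner_left, ContinuousLinearMap.adjoint_inner_right]
  -- quadratic form
  have hquad : ∀ x : E, (inner ℝ (T x) (x) : ℝ) = ‖x‖ ^ 2 - lam * ‖S x‖ ^ 2 := by
    intro x
    rw [hTapp, inner_sub_left, real_inner_smul_left,
      ContinuousLinearMap.adjoint_inner_left, real_inner_self_eq_norm_sq,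
      real_inner_self_eq_norm_sq]
  have hB0 : 0 ≤ B := le_trans hγ0 (by
    obtain ⟨r, hr⟩ := hKne
    exact le_trans (hγ ▸ csInf_le hbddB hr) (hB ▸ le_csSup hbddA hr))
  -- key bound on the quadratic form
  have hkey : ∀ x ∈ N, |(inner ℝ (T x) (x) : ℝ)| ≤ c * ‖x‖ ^ 2 := by
    intro x hx
    rw [hquad]
    have h1 := hlow x hx
    have h2 := hup x hx
    have hsq1 : γ ^ 2 * ‖x‖ ^ 2 ≤ ‖S x‖ ^ 2 := by
      nlinarith [mul_le_mul h1 h1 (mul_nonneg hγ0 (norm_nonneg x)) (norm_nonneg (S x))]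
    have hsq2 : ‖S x‖ ^ 2 ≤ B ^ 2 * ‖x‖ ^ 2 := by
      nlinarith [mul_le_mul h2 h2 (norm_nonneg (S x)) (mul_nonneg hB0 (norm_nonneg x))]
    have hc1 : 1 - lam * B ^ 2 ≤ c := (le_abs_self _).trans (le_max_left _ _)
    have hc2 : 1 - lam * γ ^ 2 ≤ c := (le_abs_self _).trans (le_max_right _ _)
    have hc3 : -c ≤ 1 - lam * B ^ 2 := by
      have := neg_abs_le (1 - lam * B ^ 2)
      have h := le_max_left |1 - lam * B ^ 2| |1 - lam * γ ^ 2|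
      linarith
    have hc4 : -c ≤ 1 - lam * γ ^ 2 := by
      have := neg_abs_le (1 - lam * γ ^ 2)
      have h := le_max_right |1 - lam * B ^ 2| |1 - lam * γ ^ 2|
      linarith
    rw [abs_le]
    have hxsq : (0:ℝ) ≤ ‖x‖ ^ 2 := sq_nonneg _
    rcases le_or_gt 0 lam with hl | hl
    · constructor
      · nlinarith
      · nlinarith
    · constructor
      · nlinarith
      · nlinarith
  -- pointwise norm bound via polarization
  have hc0 : 0 ≤ c := le_trans (abs_nonneg _) (le_max_left _ _)
  clear hK hB hγ hbddA hbddB hKne hc hquad hlow hup hγ0 hB0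
  clear_value c K
  clear K
  have hnorm : ∀ x ∈ N, ‖T x‖ ≤ c * ‖x‖ := by
    intro x hx
    rcases eq_or_ne (T x) 0 with h0 | h0
    · rw [h0, norm_zero]; positivity
    · set y : E := (‖x‖ / ‖T x‖) • T x with hy
      have hyN : y ∈ N := Submodule.smul_mem N _ (hTmem x hx)
      have hny : ‖y‖ = ‖x‖ := by
        rw [hy, norm_smul, norm_div, norm_norm, norm_norm, div_mul_cancel₀]
        exact norm_ne_zero_iff.mpr h0
      have hinner : (inner ℝ (T x) (y) : ℝ) = ‖x‖ * ‖T x‖ := by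
        have hTx : ‖T x‖ ≠ 0 := norm_ne_zero_iff.mpr h0
        rw [hy, real_inner_smul_right, real_inner_self_eq_norm_sq, sq,
          div_mul_eq_mul_div, mul_div_assoc, mul_div_cancel_left₀ _ hTx]
      have hpol : 4 * (inner ℝ (T x) (y) : ℝ) = (inner ℝ (T (x + y)) (x + y) : ℝ) - (inner ℝ (T (x - y)) (x - y) : ℝ) := by
        rw [map_add, map_sub, inner_add_left, inner_add_right, inner_add_right,
          inner_sub_left, inner_sub_right, inner_sub_right]
        have := hsym x y
        have h2 := real_inner_comm x (T y)
        have h3 := real_inner_comm y (T x)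
        linarith [hsym x y, real_inner_comm (T y) x, real_inner_comm (T x) y]
      clear hy
      clear_value y
      have hk1 := hkey (x + y) (Submodule.add_mem N hx hyN)
      have hk2 := hkey (x - y) (Submodule.sub_mem N hx hyN)
      have hpar : ‖x + y‖ ^ 2 + ‖x - y‖ ^ 2 = 2 * (‖x‖ ^ 2 + ‖y‖ ^ 2) := by
        have := parallelogram_law_with_norm ℝ x y
        nlinarith [this]
      have h4 : 4 * (‖x‖ * ‖T x‖) ≤ 4 * c * ‖x‖ ^ 2 := by
        have e1 : (inner ℝ (T (x+y)) (x+y) : ℝ) ≤ c * ‖x+y‖ ^ 2 := (abs_le.mp hk1).2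
        have e2 : -(c * ‖x-y‖ ^ 2) ≤ (inner ℝ (T (x-y)) (x-y) : ℝ) := (abs_le.mp hk2).1
        have : 4 * (inner ℝ (T x) (y) : ℝ) ≤ c * ‖x+y‖ ^ 2 + c * ‖x-y‖ ^ 2 := by
          rw [hpol]; linarith
        rw [hinner] at this
        have hsum : ‖x + y‖ ^ 2 + ‖x - y‖ ^ 2 = 4 * ‖x‖ ^ 2 := by rw [hpar, hny]; ring
        nlinarith [this, hsum, hc0]
      rcases eq_or_ne x 0 with rfl | hx0
      · simp only [map_zero] at h0; exact absurd rfl h0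
      · have hxpos : 0 < ‖x‖ := norm_pos_iff.mpr hx0
        nlinarith [h4, hxpos]
  -- conclude
  intro v hv w hw
  have hdiff : (v + lam • (ContinuousLinearMap.adjoint S) (s - S v)) -
      (w + lam • (ContinuousLinearMap.adjoint S) (s - S w)) = T (v - w) := by
    rw [hTapp, map_sub S v w, map_sub (ContinuousLinearMap.adjoint S) (S v) (S w),
      smul_sub, map_sub (ContinuousLinearMap.adjoint S) s (S v),
      map_sub (ContinuousLinearMap.adjoint S) s (S w), smul_sub, smul_sub]
    abel
  rw [hdiff]
  exact hnorm (v - w) (Submodule.sub_mem N hv hw)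
end

section
/- Let E and F be real Hilbert spaces and S : E → F a continuous linear map with closed range; let S* be its adjoint, N := (ker S)^⊥, B := sup{ ‖Su‖/‖u‖ : u ∈ N, u ≠ 0 } and γ := inf{ ‖Su‖/‖u‖ : u ∈ N, u ≠ 0 } (so γ > 0). Let ε > 0, let (λ_n)_{n≥0} be a sequence with λ_n ∈ [ε, 2B⁻² − ε] for all n, let s ∈ F, u⁽⁰⁾ ∈ E, and define u⁽ⁿ⁺¹⁾ := u⁽ⁿ⁾ + λ_n S*(s − S u⁽ⁿ⁾). Let w be the unique element of N with Sw = P_{ran(S)} s. Then (u⁽ⁿ⁾) converges in norm to u^∞ := w + P_{ker(S)} u⁽⁰⁾, with the linear rate ‖u⁽ⁿ⁾ − u^∞‖ ≤ (1 − ε γ²)ⁿ ‖u⁽⁰⁾ − u^∞‖ for all n ≥ 0; moreover u^∞ is the unique nearest point to u⁽⁰⁾ in the set M_s := {v ∈ E : ‖Sv − s‖ is minimal}. -/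
open scoped RealInnerProductSpace

lemma nr_bound {E : Type*} [NormedAddCommGroup E] [InnerProductSpace ℝ E]
    (A : E →ₗ[ℝ] E) (hA : ∀ x y : E, ⟪A x, y⟫ = ⟪x, A y⟫)
    (M : Submodule ℝ E) (hAM : ∀ x ∈ M, A x ∈ M)
    (c : ℝ) (hc : 0 ≤ c) (hq : ∀ x ∈ M, |⟪A x, x⟫| ≤ c * ‖x‖ ^ 2)
    {x : E} (hx : x ∈ M) : ‖A x‖ ≤ c * ‖x‖ := by
  rcases eq_or_ne (A x) 0 with h | h
  · rw [h, norm_zero]; positivity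
  have hxne : x ≠ 0 := by rintro rfl; simp at h
  have hxpos : 0 < ‖x‖ := norm_pos_iff.mpr hxne
  have hApos : 0 < ‖A x‖ := norm_pos_iff.mpr h
  set y : E := (‖x‖ / ‖A x‖) • A x with hy
  have hyM : y ∈ M := Submodule.smul_mem _ _ (hAM x hx)
  have hyn : ‖y‖ = ‖x‖ := by
    rw [hy, norm_smul, Real.norm_eq_abs, abs_div, abs_norm, abs_norm,
      div_mul_cancel₀ _ (ne_of_gt hApos)]
  have hAxy : ⟪A x, y⟫ = ‖x‖ * ‖A x‖ := by
    rw [hy, real_inner_smul_right, real_inner_self_eq_norm_sq]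
    field_simp
  have key : 4 * ⟪A x, y⟫ = ⟪A (x + y), x + y⟫ - ⟪A (x - y), x - y⟫ := by
    have h1 := hA y x
    have h2 := real_inner_comm y (A x)
    simp only [map_add, map_sub, inner_add_left, inner_add_right,
      inner_sub_left, inner_sub_right]
    linarith
  have b1 := (abs_le.mp (hq _ (M.add_mem hx hyM))).2
  have b2 := (abs_le.mp (hq _ (M.sub_mem hx hyM))).1
  have par := parallelogram_law_with_norm ℝ x y
  have e1 : ‖x + y‖ ^ 2 + ‖x - y‖ ^ 2 = 4 * ‖x‖ ^ 2 := by
    rw [hyn] at par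
    simp only [sq]
    linarith
  have h4 : 4 * (‖x‖ * ‖A x‖) ≤ 4 * c * ‖x‖ ^ 2 := by
    nlinarith [mul_le_mul_of_nonneg_left e1.le hc]
  nlinarith



set_option maxHeartbeats 2000000 in
/-- Generalized frame algorithm. For a bounded operator
`S : E → F` with closed range, `K := ker S`, `B` and `γ` the supremum and
infimum of `‖S u‖/‖u‖` over nonzero `u ∈ Kᗮ`, relaxation coefficients
`λ_n ∈ [ε, 2B⁻² - ε]`, and iteration `u⁽ⁿ⁺¹⁾ = u⁽ⁿ⁾ + λ_n S*(s - S u⁽ⁿ⁾)`: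
if `w` is the (unique) element of `Kᗮ` with `S w = P_{ran S} s`, then `u⁽ⁿ⁾`
converges in norm to `u^∞ := w + P_K u⁽⁰⁾` at the linear rate
`‖u⁽ⁿ⁾ - u^∞‖ ≤ (1 - εγ²)ⁿ ‖u⁽⁰⁾ - u^∞‖`, and `u^∞` is the unique nearest
point to `u⁽⁰⁾` in the set of least-squares solutions `M_s`. -/
theorem generalized_frame_algorithm_converges
    {E F : Type*} [NormedAddCommGroup E] [InnerProductSpace ℝ E] [CompleteSpace E]
    [NormedAddCommGroup F] [InnerProductSpace ℝ F] [CompleteSpace F]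
    (S : E →L[ℝ] F)
    (Rn : Submodule ℝ F) [CompleteSpace Rn] (hRn : Rn = LinearMap.range (S : E →ₗ[ℝ] F))
    (K : Submodule ℝ E) [CompleteSpace K] (hK : K = LinearMap.ker (S : E →ₗ[ℝ] F))
    (B γ : ℝ)
    (hB : B = sSup {r : ℝ | ∃ u ∈ Kᗮ, u ≠ 0 ∧ r = ‖S u‖ / ‖u‖})
    (hγ : γ = sInf {r : ℝ | ∃ u ∈ Kᗮ, u ≠ 0 ∧ r = ‖S u‖ / ‖u‖})
    (ε : ℝ) (hε : 0 < ε)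
    (lam : ℕ → ℝ) (hlam : ∀ n, ε ≤ lam n ∧ lam n ≤ 2 / B ^ 2 - ε)
    (s : F) (u : ℕ → E)
    (hrec : ∀ n, u (n+1) = u n + lam n • (ContinuousLinearMap.adjoint S) (s - S (u n)))
    (w : E) (hw : w ∈ Kᗮ) (hws : S w = (Submodule.orthogonalProjectionOnto Rn s : F)) :
    Filter.Tendsto u Filter.atTop (nhds (w + (Submodule.orthogonalProjectionOnto K (u 0) : E))) ∧
    (∀ n : ℕ, ‖u n - (w + (Submodule.orthogonalProjectionOnto K (u 0) : E))‖
        ≤ (1 - ε * γ ^ 2) ^ n * ‖u 0 - (w + (Submodule.orthogonalProjectionOnto K (u 0) : E))‖) ∧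
    (∀ v : E, ‖S (w + (Submodule.orthogonalProjectionOnto K (u 0) : E)) - s‖ ≤ ‖S v - s‖) ∧
    (∀ v : E, (∀ v' : E, ‖S v - s‖ ≤ ‖S v' - s‖) →
      v ≠ w + (Submodule.orthogonalProjectionOnto K (u 0) : E) →
      ‖u 0 - (w + (Submodule.orthogonalProjectionOnto K (u 0) : E))‖ < ‖u 0 - v‖) := by
  set Q : Set ℝ := {r : ℝ | ∃ u ∈ Kᗮ, u ≠ 0 ∧ r = ‖S u‖ / ‖u‖} with hQ
  -- Q is nonempty
  have hQne : Q.Nonempty := by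
    by_contra hne
    rw [Set.not_nonempty_iff_eq_empty] at hne
    rw [show Q = ∅ from hne, Real.sSup_empty] at hB
    have h0 := hlam 0
    rw [hB] at h0
    norm_num at h0
    linarith [h0.1, h0.2]
  have hQnonneg : ∀ r ∈ Q, 0 ≤ r := by
    rintro r ⟨x, hx, hx0, rfl⟩
    positivity
  have hQbdd : BddAbove Q := by
    refine ⟨‖S‖, ?_⟩
    rintro r ⟨x, hx, hx0, rfl⟩
    rw [div_le_iff₀ (norm_pos_iff.mpr hx0)]
    exact S.le_opNorm x
  have hQbddb : BddBelow Q := ⟨0, hQnonneg⟩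
  -- B bounds
  have hSleB : ∀ x ∈ Kᗮ, ‖S x‖ ≤ B * ‖x‖ := by
    intro x hx
    rcases eq_or_ne x 0 with rfl | hx0
    · simp
    · have hmem : ‖S x‖ / ‖x‖ ∈ Q := ⟨x, hx, hx0, rfl⟩
      have := le_csSup hQbdd hmem
      rw [← hB] at this
      rw [div_le_iff₀ (norm_pos_iff.mpr hx0)] at this
      linarith [this]
  have hγleQ : ∀ r ∈ Q, γ ≤ r := fun r hr => hγ ▸ csInf_le hQbddb hr
  have hγleS : ∀ x ∈ Kᗮ, γ * ‖x‖ ≤ ‖S x‖ := by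
    intro x hx
    rcases eq_or_ne x 0 with rfl | hx0
    · simp
    · have := hγleQ _ ⟨x, hx, hx0, rfl⟩
      rw [le_div_iff₀ (norm_pos_iff.mpr hx0)] at this
      linarith
  have hγB : γ ≤ B := by
    obtain ⟨r, hr⟩ := hQne
    exact le_trans (hγleQ r hr) (hB ▸ le_csSup hQbdd hr)
  have hγnonneg : 0 ≤ γ := hγ ▸ le_csInf hQne hQnonneg
  -- γ > 0 via closed range
  have hkey : ∃ C : ℝ, ∀ x ∈ Kᗮ, ‖x‖ ≤ C * ‖S x‖ := by
    have hmemr : ∀ z : Kᗮ, S z.1 ∈ Rn := by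
      intro z; rw [hRn]; exact LinearMap.mem_range_self _ _
    set Sr : (Kᗮ : Submodule ℝ E) →L[ℝ] Rn :=
      ContinuousLinearMap.codRestrict (S.comp (Kᗮ.subtypeL)) Rn hmemr with hSr
    have hker : LinearMap.ker (Sr : Kᗮ →ₗ[ℝ] Rn) = ⊥ := by
      rw [Submodule.eq_bot_iff]
      rintro ⟨x, hx⟩ hx0
      have hS0 : S x = 0 := by
        have := congrArg (Subtype.val) hx0
        exact this
      have hxK : x ∈ K := by rw [hK]; exact hS0
      have : x = 0 := by
        have := (Submodule.mem_orthogonal K x).mp hx x hxK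
        rwa [inner_self_eq_zero] at this
      simpa using this
    have hrange : LinearMap.range (Sr : Kᗮ →ₗ[ℝ] Rn) = ⊤ := by
      rw [Submodule.eq_top_iff']
      rintro ⟨y, hy⟩
      rw [hRn] at hy
      obtain ⟨x, hx⟩ := hy
      refine ⟨⟨x - (Submodule.orthogonalProjectionOnto K x : E), Submodule.sub_starProjection_mem_orthogonal x⟩, ?_⟩
      apply Subtype.ext
      have hPx : S ((Submodule.orthogonalProjectionOnto K x : E)) = 0 := by
        have : ((Submodule.orthogonalProjectionOnto K x : E)) ∈ LinearMap.ker (S : E →ₗ[ℝ] F) := by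
          rw [← hK]; exact (Submodule.orthogonalProjectionOnto K x).2
        exact this
      show S (x - (Submodule.orthogonalProjectionOnto K x : E)) = y
      rw [map_sub, hPx, sub_zero]; exact hx
    set eqv := ContinuousLinearEquiv.ofBijective Sr hker hrange with heqv
    refine ⟨‖(eqv.symm : Rn →L[ℝ] Kᗮ)‖, fun x hx => ?_⟩
    have h1 : ‖(⟨x, hx⟩ : Kᗮ)‖ ≤ ‖(eqv.symm : Rn →L[ℝ] Kᗮ)‖ * ‖Sr ⟨x, hx⟩‖ := by
      conv_lhs => rw [← eqv.symm_apply_apply ⟨x, hx⟩]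
      exact (eqv.symm : Rn →L[ℝ] Kᗮ).le_opNorm (eqv ⟨x, hx⟩)
    exact h1
  obtain ⟨C, key⟩ := hkey
  have hγpos : 0 < γ := by
    have hCpos : 0 < C := by
      obtain ⟨r, x, hx, hx0, rfl⟩ := hQne
      have hxpos : (0:ℝ) < ‖x‖ := norm_pos_iff.mpr hx0
      have hk := key x hx
      nlinarith [norm_nonneg (S x)]
    have hlow : ∀ r' ∈ Q, 1 / C ≤ r' := by
      rintro r' ⟨x', hx', hx0', rfl⟩
      have hx'pos : (0:ℝ) < ‖x'‖ := norm_pos_iff.mpr hx0'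
      have hk := key x' hx'
      rw [div_le_div_iff₀ hCpos hx'pos]
      nlinarith
    calc (0:ℝ) < 1 / C := by positivity
      _ ≤ γ := hγ ▸ le_csInf hQne hlow
  -- main body
  have hBpos : 0 < B := lt_of_lt_of_le hγpos hγB
  have hεB : ε * B ^ 2 ≤ 1 := by
    have h0 := hlam 0
    have h2 : ε ≤ 2 / B ^ 2 - ε := le_trans h0.1 h0.2
    have h3 : 2 * ε ≤ 2 / B ^ 2 := by linarith
    rw [le_div_iff₀ (by positivity)] at h3
    linarith
  set c : ℝ := 1 - ε * γ ^ 2 with hc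
  have hεγ : ε * γ ^ 2 ≤ ε * B ^ 2 :=
    mul_le_mul_of_nonneg_left (by nlinarith [hγB, hγnonneg] : γ ^ 2 ≤ B ^ 2) hε.le
  have hc0 : 0 ≤ c := by rw [hc]; linarith
  have hc1 : c < 1 := by
    have hp : 0 < ε * γ ^ 2 := by positivity
    rw [hc]; linarith
  set uinf : E := w + (Submodule.orthogonalProjectionOnto K (u 0) : E) with huinf
  have hPK : S ((Submodule.orthogonalProjectionOnto K (u 0) : E)) = 0 := by
    have : ((Submodule.orthogonalProjectionOnto K (u 0)) : E) ∈ LinearMap.ker (S : E →ₗ[ℝ] F) := by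
      rw [← hK]; exact (Submodule.orthogonalProjectionOnto K (u 0)).2
    exact this
  have hSuinf : S uinf = (Submodule.orthogonalProjectionOnto Rn s : F) := by
    rw [huinf, map_add, hPK, add_zero, hws]
  have horths : s - (Submodule.orthogonalProjectionOnto Rn s : F) ∈ Rnᗮ :=
    Submodule.sub_starProjection_mem_orthogonal s
  have hadj0 : (ContinuousLinearMap.adjoint S) (s - S uinf) = 0 := by
    rw [hSuinf]
    set z : F := s - (Submodule.orthogonalProjectionOnto Rn s : F) with hz
    have hinz : ⟪(ContinuousLinearMap.adjoint S) z, (ContinuousLinearMap.adjoint S) z⟫ = 0 := by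
      rw [ContinuousLinearMap.adjoint_inner_left]
      have hmem : S ((ContinuousLinearMap.adjoint S) z) ∈ Rn := by
        rw [hRn]; exact LinearMap.mem_range_self _ _
      have := (Submodule.mem_orthogonal Rn z).mp horths _ hmem
      rw [real_inner_comm] at this
      exact this
    rwa [inner_self_eq_zero] at hinz
  have hadjmem : ∀ y : F, (ContinuousLinearMap.adjoint S) y ∈ Kᗮ := by
    intro y
    rw [Submodule.mem_orthogonal]
    intro k hk
    rw [ContinuousLinearMap.adjoint_inner_right]
    have hSk : S k = 0 := by rw [hK] at hk; exact hk
    rw [hSk, inner_zero_left]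
  have herr : ∀ n, u (n+1) - uinf
      = (u n - uinf) - lam n • (ContinuousLinearMap.adjoint S) (S (u n - uinf)) := by
    intro n
    rw [hrec n]
    have hsplit : s - S (u n) = (s - S uinf) - S (u n - uinf) := by
      rw [map_sub]; abel
    rw [hsplit, map_sub, hadj0, zero_sub, smul_neg]
    abel
  have hmemKo : ∀ n, u n - uinf ∈ Kᗮ := by
    intro n
    induction n with
    | zero =>
      have h0 : u 0 - uinf = (u 0 - (Submodule.orthogonalProjectionOnto K (u 0) : E)) - w := by
        rw [huinf]; abel
      rw [h0]
      exact Submodule.sub_mem _ (Submodule.sub_starProjection_mem_orthogonal (u 0)) hw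
    | succ n ih =>
      rw [herr n]
      exact Submodule.sub_mem _ ih (Submodule.smul_mem _ _ (hadjmem _))
  have hstep : ∀ n, ‖u (n+1) - uinf‖ ≤ c * ‖u n - uinf‖ := by
    intro n
    set A : E →ₗ[ℝ] E :=
      LinearMap.id - lam n • (((ContinuousLinearMap.adjoint S).comp S) : E →ₗ[ℝ] E) with hA
    have hAapp : ∀ x : E, A x = x - lam n • (ContinuousLinearMap.adjoint S) (S x) := by
      intro x; simp [hA]
    have hAsa : ∀ x y : E, ⟪A x, y⟫ = ⟪x, A y⟫ := by
      intro x y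
      rw [hAapp, hAapp]
      rw [inner_sub_left, inner_sub_right, real_inner_smul_left, real_inner_smul_right,
        ContinuousLinearMap.adjoint_inner_left, ContinuousLinearMap.adjoint_inner_right]
    have hAM : ∀ x ∈ Kᗮ, A x ∈ Kᗮ := by
      intro x hx
      rw [hAapp]
      exact Submodule.sub_mem _ hx (Submodule.smul_mem _ _ (hadjmem _))
    have hq : ∀ x ∈ Kᗮ, |⟪A x, x⟫| ≤ c * ‖x‖ ^ 2 := by
      intro x hx
      have hinner : ⟪A x, x⟫ = ‖x‖ ^ 2 - lam n * ‖S x‖ ^ 2 := by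
        rw [hAapp, inner_sub_left, real_inner_smul_left,
          ContinuousLinearMap.adjoint_inner_left, real_inner_self_eq_norm_sq,
          real_inner_self_eq_norm_sq]
      have h1 := hγleS x hx
      have h2 := hSleB x hx
      have h3 := (hlam n).1
      have h4 := (hlam n).2
      have hSx2 : ‖S x‖ ^ 2 ≤ B ^ 2 * ‖x‖ ^ 2 := by
        nlinarith [norm_nonneg (S x), norm_nonneg x]
      have hgx2 : γ ^ 2 * ‖x‖ ^ 2 ≤ ‖S x‖ ^ 2 := by
        nlinarith [norm_nonneg (S x), norm_nonneg x, mul_nonneg hγnonneg (norm_nonneg x)]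
      have hcx : c * ‖x‖ ^ 2 = ‖x‖ ^ 2 - ε * γ ^ 2 * ‖x‖ ^ 2 := by rw [hc]; ring
      have hm : ε * (γ ^ 2 * ‖x‖ ^ 2) ≤ lam n * ‖S x‖ ^ 2 :=
        mul_le_mul h3 hgx2 (by positivity) (by linarith)
      have hm2 : lam n * ‖S x‖ ^ 2 ≤ (2 / B ^ 2 - ε) * (B ^ 2 * ‖x‖ ^ 2) :=
        mul_le_mul h4 hSx2 (by nlinarith [norm_nonneg (S x)]) (by linarith)
      have heq : (2 / B ^ 2 - ε) * (B ^ 2 * ‖x‖ ^ 2) = (2 - ε * B ^ 2) * ‖x‖ ^ 2 := by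
        have hBne : B ^ 2 ≠ 0 := by positivity
        field_simp
      have hmono := mul_le_mul_of_nonneg_right hεγ (sq_nonneg ‖x‖)
      rw [hinner, abs_le]
      constructor
      · linarith [hm2, heq, hmono, hcx]
      · linarith [hm, hcx]
    have hnr := nr_bound A hAsa Kᗮ hAM c hc0 hq (hmemKo n)
    have hAe : A (u n - uinf) = u (n+1) - uinf := by rw [herr n, hAapp]
    rwa [hAe] at hnr
  have hrate : ∀ n, ‖u n - uinf‖ ≤ c ^ n * ‖u 0 - uinf‖ := by
    intro n
    induction n with
    | zero => simp
    | succ n ih =>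
      calc ‖u (n+1) - uinf‖ ≤ c * ‖u n - uinf‖ := hstep n
        _ ≤ c * (c ^ n * ‖u 0 - uinf‖) := mul_le_mul_of_nonneg_left ih hc0
        _ = c ^ (n+1) * ‖u 0 - uinf‖ := by ring
  have htend : Filter.Tendsto u Filter.atTop (nhds uinf) := by
    rw [tendsto_iff_norm_sub_tendsto_zero]
    have h0 : Filter.Tendsto (fun n => c ^ n * ‖u 0 - uinf‖) Filter.atTop (nhds 0) := by
      have hp := tendsto_pow_atTop_nhds_zero_of_lt_one hc0 hc1
      simpa using hp.mul_const ‖u 0 - uinf‖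
    exact squeeze_zero (fun n => norm_nonneg _) hrate h0
  have hpyth : ∀ v : E, ‖S v - s‖ ^ 2 = ‖S v - S uinf‖ ^ 2 + ‖S uinf - s‖ ^ 2 := by
    intro v
    have h1 : S v - S uinf ∈ Rn := by
      rw [hRn]; exact ⟨v - uinf, by rw [map_sub]; rfl⟩
    have h2 : ⟪S v - S uinf, S uinf - s⟫ = 0 := by
      have hmemo := (Submodule.mem_orthogonal Rn _).mp horths _ h1
      have hneg : S uinf - s = -(s - (Submodule.orthogonalProjectionOnto Rn s : F)) := by
        rw [hSuinf]; abel
      rw [hneg, inner_neg_right, hmemo, neg_zero]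
    have hdecomp : S v - s = (S v - S uinf) + (S uinf - s) := by abel
    rw [hdecomp, norm_add_sq_real, h2]
    ring
  have hmin : ∀ v : E, ‖S uinf - s‖ ≤ ‖S v - s‖ := by
    intro v
    have := hpyth v
    nlinarith [norm_nonneg (S v - s), norm_nonneg (S uinf - s), sq_nonneg ‖S v - S uinf‖]
  refine ⟨htend, hrate, hmin, ?_⟩
  intro v hvmin hvne
  have h1 : ‖S v - s‖ = ‖S uinf - s‖ := le_antisymm (hvmin uinf) (hmin v)
  have h2 : S v = S uinf := by
    have hp := hpyth v
    rw [h1] at hp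
    have : ‖S v - S uinf‖ ^ 2 = 0 := by linarith
    have hn0 : ‖S v - S uinf‖ = 0 := by
      nlinarith [norm_nonneg (S v - S uinf)]
    rw [norm_eq_zero, sub_eq_zero] at hn0
    exact hn0
  have hd : v - uinf ∈ K := by
    rw [hK]
    show S (v - uinf) = 0
    rw [map_sub, h2, sub_self]
  have hdne : v - uinf ≠ 0 := sub_ne_zero.mpr hvne
  have hperp : ⟪u 0 - uinf, v - uinf⟫ = 0 := by
    have := (Submodule.mem_orthogonal K (u 0 - uinf)).mp (hmemKo 0) _ hd
    rw [real_inner_comm] at this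
    exact this
  have hpyth2 : ‖u 0 - v‖ ^ 2 = ‖u 0 - uinf‖ ^ 2 + ‖v - uinf‖ ^ 2 := by
    have hdec : u 0 - v = (u 0 - uinf) - (v - uinf) := by abel
    rw [hdec, norm_sub_sq_real, hperp]
    ring
  have hdpos : 0 < ‖v - uinf‖ := norm_pos_iff.mpr hdne
  have hlt : ‖u 0 - uinf‖ ^ 2 < ‖u 0 - v‖ ^ 2 := by nlinarith
  exact lt_of_pow_lt_pow_left₀ 2 (norm_nonneg _) hlt
end

section
/- Let H be a real Hilbert space, A a closed linear subspace with orthogonal projection P_A, and (g_k)_{k∈Z} a family of pairwise orthogonal nonzero vectors of H. Let S : A → ℓ²(Z) be defined by (Su)_k := ⟨u, g_k⟩/‖g_k‖ (so ‖S‖ ≤ 1), and suppose ran(S) is closed in ℓ²(Z); let S* be the adjoint of S, F := (ker S)^⊥ within A, and γ := inf{ ‖Su‖_{ℓ²}/‖u‖ : u ∈ F, u ≠ 0 } > 0. Let ε > 0, let (λ_n)_{n≥0} satisfy λ_n ∈ [ε, 2 − ε] for all n, let s ∈ ℓ²(Z), u⁽⁰⁾ ∈ A, and define u⁽ⁿ⁺¹⁾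 := u⁽ⁿ⁾ + λ_n S*(s − S u⁽ⁿ⁾). Then (u⁽ⁿ⁾) converges in norm to u^∞ := w + Q u⁽⁰⁾, where w is the unique element of F with Sw = P_{ran(S)} s and Q is the orthogonal projection of A onto ker(S), and ‖u⁽ⁿ⁾ − u^∞‖ ≤ (1 − ε γ²)ⁿ ‖u⁽⁰⁾ − u^∞‖ for all n ≥ 0. -/
open RealInnerProductSpace

lemma aux_contr (E t a lam ep TT : ℝ) (hE : 0 ≤ E) (ha0 : 0 ≤ a) (ha1 : a ≤ 1)
    (ht1 : a*E ≤ t) (ht2 : t ≤ E) (hl1 : ep ≤ lam) (hl2 : lam ≤ 2-ep) (hep : 0 < ep)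
    (hTT : TT ≤ (1+a)*t - a*E) :
    E - 2*lam*t + lam^2*TT ≤ (1-ep*a)^2*E := by
  have hl0 : 0 < lam := lt_of_lt_of_le hep hl1
  have h1 : lam^2*TT ≤ lam^2*((1+a)*t - a*E) := by nlinarith [sq_nonneg lam]
  rcases le_or_gt 0 (lam^2*(1+a) - 2*lam) with hc | hc
  · have h2 : (lam^2*(1+a) - 2*lam)*t ≤ (lam^2*(1+a) - 2*lam)*E :=
      mul_le_mul_of_nonneg_left ht2 hc
    have h3 : (1-lam)^2*E ≤ (1-ep*a)^2*E := by
      have key : 0 ≤ (lam - ep*a)*(2 - lam - ep*a) := by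
        apply mul_nonneg <;> nlinarith
      nlinarith
    nlinarith
  · have h2 : (lam^2*(1+a) - 2*lam)*t ≤ (lam^2*(1+a) - 2*lam)*(a*E) :=
      mul_le_mul_of_nonpos_left ht1 hc.le
    have h3 : (1-lam*a)^2*E ≤ (1-ep*a)^2*E := by
      have key : 0 ≤ (lam*a - ep*a)*(2 - lam*a - ep*a) := by
        apply mul_nonneg <;> nlinarith
      nlinarith
    nlinarith

set_option maxHeartbeats 4000000 in
/-- Frame-algorithm convergence for the sampling operator
`S : A → ℓ²(Z)`, `(S u) k = ⟨u, g k⟩/‖g k‖` with pairwise orthogonal nonzero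
kernels (so `‖S‖ ≤ 1`) and closed range. With `K := ker S`, `F := Kᗮ`,
`γ := inf ‖S u‖/‖u‖` over nonzero `u ∈ F` (positive), `λ_n ∈ [ε, 2 - ε]`, and
`u⁽ⁿ⁺¹⁾ = u⁽ⁿ⁾ + λ_n S*(s - S u⁽ⁿ⁾)`: if `w ∈ F` satisfies `S w = P_{ran S} s`,
then `u⁽ⁿ⁾ → u^∞ := w + Q u⁽⁰⁾` (Q the projection onto `ker S`) with
`‖u⁽ⁿ⁾ - u^∞‖ ≤ (1 - εγ²)ⁿ ‖u⁽⁰⁾ - u^∞‖`. -/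
theorem sampling_POCS_frame_algorithm_converges
    {H : Type*} [NormedAddCommGroup H] [InnerProductSpace ℝ H] [CompleteSpace H]
    {Z : Type*} (A : Submodule ℝ H) [CompleteSpace A]
    (g : Z → H) (hg : ∀ k j : Z, k ≠ j → ⟪g k, g j⟫ = 0) (hg0 : ∀ k : Z, g k ≠ 0)
    (S : A →L[ℝ] lp (fun _ : Z => ℝ) 2)
    (hS : ∀ (u : A) (k : Z), (S u : ∀ _ : Z, ℝ) k = ⟪(u : H), g k⟫ / ‖g k‖)
    (Rn : Submodule ℝ (lp (fun _ : Z => ℝ) 2)) [CompleteSpace Rn]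
    (hRn : Rn = LinearMap.range (S : A →ₗ[ℝ] lp (fun _ : Z => ℝ) 2))
    (K : Submodule ℝ A) [CompleteSpace K] (hK : K = LinearMap.ker (S : A →ₗ[ℝ] lp (fun _ : Z => ℝ) 2))
    (γ : ℝ) (hγ : γ = sInf {r : ℝ | ∃ u ∈ Kᗮ, u ≠ 0 ∧ r = ‖S u‖ / ‖u‖})
    (hγpos : 0 < γ)
    (ε : ℝ) (hε : 0 < ε)
    (lam : ℕ → ℝ) (hlam : ∀ n, ε ≤ lam n ∧ lam n ≤ 2 - ε)
    (s : lp (fun _ : Z => ℝ) 2) (u : ℕ → A)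
    (hrec : ∀ n, u (n+1) = u n + lam n • (ContinuousLinearMap.adjoint S) (s - S (u n)))
    (w : A) (hw : w ∈ Kᗮ)
    (hws : S w = (Submodule.orthogonalProjectionOnto Rn s : lp (fun _ : Z => ℝ) 2)) :
    Filter.Tendsto u Filter.atTop (nhds (w + (Submodule.orthogonalProjectionOnto K (u 0) : A))) ∧
    ∀ n : ℕ, ‖u n - (w + (Submodule.orthogonalProjectionOnto K (u 0) : A))‖
        ≤ (1 - ε * γ ^ 2) ^ n * ‖u 0 - (w + (Submodule.orthogonalProjectionOnto K (u 0) : A))‖ := by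
  classical
  obtain ⟨L, hL⟩ : ∃ L : A, L = w + (Submodule.orthogonalProjectionOnto K (u 0) : A) := ⟨_, rfl⟩
  rw [← hL]
  have hadj : ∀ (v : lp (fun _ : Z => ℝ) 2) (x : A),
      ⟪(ContinuousLinearMap.adjoint S) v, x⟫ = ⟪v, S x⟫ := fun v x =>
    ContinuousLinearMap.adjoint_inner_left S x v
  -- ‖S v‖ ≤ ‖v‖ via Bessel
  have hortho : Orthonormal ℝ (fun k : Z => ‖g k‖⁻¹ • g k) := by
    rw [orthonormal_iff_ite]
    intro i j
    by_cases hij : i = j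
    · subst hij
      have hne : ‖g i‖ ≠ 0 := norm_ne_zero_iff.mpr (hg0 i)
      show ⟪‖g i‖⁻¹ • g i, ‖g i‖⁻¹ • g i⟫ = _
      rw [real_inner_smul_left, real_inner_smul_right, real_inner_self_eq_norm_sq,
        if_pos rfl, sq]
      field_simp
    · simp [real_inner_smul_left, real_inner_smul_right, hg i j hij, hij]
  have hSle : ∀ v : A, ‖S v‖ ≤ ‖v‖ := by
    intro v
    have h1 : ‖S v‖^2 = ∑' k, ‖⟪(‖g k‖⁻¹ • g k : H), (v : H)⟫‖^2 := by
      rw [← real_inner_self_eq_norm_sq, lp.inner_eq_tsum]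
      congr 1
      ext k
      rw [real_inner_self_eq_norm_sq, hS]
      rw [real_inner_smul_left, real_inner_comm]
      rw [div_eq_inv_mul]
    have h2 : ∑' k, ‖⟪(‖g k‖⁻¹ • g k : H), (v : H)⟫‖^2 ≤ ‖(v : H)‖^2 :=
      hortho.tsum_inner_products_le (v : H)
    have h3 : ‖(v : H)‖ = ‖v‖ := rfl
    nlinarith [norm_nonneg (S v), norm_nonneg v, h1, h2]
  -- γ lower bound
  have hbdd : BddBelow {r : ℝ | ∃ u ∈ Kᗮ, u ≠ 0 ∧ r = ‖S u‖ / ‖u‖} := by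
    refine ⟨0, ?_⟩
    rintro r ⟨x, -, -, rfl⟩
    positivity
  have hgamma_le : ∀ x : A, x ∈ Kᗮ → γ * ‖x‖ ≤ ‖S x‖ := by
    intro x hx
    rcases eq_or_ne x 0 with rfl | hx0
    · simp
    · have hmem : ‖S x‖ / ‖x‖ ∈ {r : ℝ | ∃ u ∈ Kᗮ, u ≠ 0 ∧ r = ‖S u‖ / ‖u‖} :=
        ⟨x, hx, hx0, rfl⟩
      have h := csInf_le hbdd hmem
      rw [← hγ] at h
      have hxpos : (0:ℝ) < ‖x‖ := norm_pos_iff.mpr hx0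
      calc γ * ‖x‖ ≤ (‖S x‖ / ‖x‖) * ‖x‖ := by nlinarith
        _ = ‖S x‖ := div_mul_cancel₀ _ hxpos.ne'
  have hγ1 : γ ≤ 1 := by
    have hne : {r : ℝ | ∃ u ∈ Kᗮ, u ≠ 0 ∧ r = ‖S u‖ / ‖u‖}.Nonempty := by
      by_contra h
      rw [Set.not_nonempty_iff_eq_empty] at h
      rw [h, Real.sInf_empty] at hγ
      exact absurd hγ (by linarith)
    obtain ⟨r, x, hxF, hx0, rfl⟩ := hne
    have h := csInf_le hbdd ⟨x, hxF, hx0, rfl⟩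
    rw [← hγ] at h
    exact h.trans (div_le_one_of_le₀ (hSle x) (norm_nonneg x))
  have hε1 : ε ≤ 1 := by linarith [(hlam 0).1, (hlam 0).2]
  have hγ2 : γ^2 ≤ 1 := by nlinarith
  -- adjoint range lands in Kᗮ
  have hTmem : ∀ v, (ContinuousLinearMap.adjoint S) v ∈ Kᗮ := by
    intro v
    rw [Submodule.mem_orthogonal]
    intro x hx
    rw [hK, LinearMap.mem_ker, ContinuousLinearMap.coe_coe] at hx
    rw [real_inner_comm, hadj, hx, inner_zero_right]
  -- S* s = S* (S w)
  have hSw_adj : (ContinuousLinearMap.adjoint S) s = (ContinuousLinearMap.adjoint S) (S w) := by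
    have hz : s - (Submodule.orthogonalProjectionOnto Rn s : lp (fun _ : Z => ℝ) 2) ∈ Rnᗮ :=
      Submodule.sub_starProjection_mem_orthogonal (K := Rn) s
    rw [← hws] at hz
    have h0 : (ContinuousLinearMap.adjoint S) (s - S w) = 0 := by
      have hn : ‖(ContinuousLinearMap.adjoint S) (s - S w)‖^2 = 0 := by
        rw [← real_inner_self_eq_norm_sq, hadj]
        have hmem : S ((ContinuousLinearMap.adjoint S) (s - S w)) ∈ Rn := by
          rw [hRn]
          exact LinearMap.mem_range_self _ _
        rw [real_inner_comm]
        exact (Submodule.mem_orthogonal Rn _).mp hz _ hmem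
      have h2 : ‖(ContinuousLinearMap.adjoint S) (s - S w)‖ = 0 := by
        nlinarith [norm_nonneg ((ContinuousLinearMap.adjoint S) (s - S w))]
      exact norm_eq_zero.mp h2
    have h1 := map_sub (ContinuousLinearMap.adjoint S) s (S w)
    rw [h0] at h1
    exact sub_eq_zero.mp h1.symm
  -- error recurrence
  have hQ0 : ∀ x : A, x ∈ K → S x = 0 := by
    intro x hx
    rw [hK, LinearMap.mem_ker] at hx
    exact hx
  have hSL : S L = S w := by
    rw [hL, map_add, hQ0 _ (Submodule.orthogonalProjectionOnto K (u 0)).2, add_zero]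
  have herec : ∀ n, u (n+1) - L
      = (u n - L) - lam n • (ContinuousLinearMap.adjoint S) (S (u n - L)) := by
    intro n
    rw [hrec n]
    have h2 : (ContinuousLinearMap.adjoint S) (s - S (u n))
        = -((ContinuousLinearMap.adjoint S) (S (u n - L))) := by
      calc (ContinuousLinearMap.adjoint S) (s - S (u n))
          = (ContinuousLinearMap.adjoint S) s - (ContinuousLinearMap.adjoint S) (S (u n)) :=
            map_sub _ _ _
        _ = (ContinuousLinearMap.adjoint S) (S w) - (ContinuousLinearMap.adjoint S) (S (u n)) := by
            rw [hSw_adj]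
        _ = -((ContinuousLinearMap.adjoint S) (S (u n - L))) := by
            rw [map_sub S, map_sub, neg_sub, hSL]
    rw [h2, smul_neg]
    abel
  have heF : ∀ n, u n - L ∈ Kᗮ := by
    intro n
    induction n with
    | zero =>
      have h1 : u 0 - L = (u 0 - (Submodule.orthogonalProjectionOnto K (u 0) : A)) - w := by rw [hL]; abel
      rw [h1]
      exact Submodule.sub_mem _ (Submodule.sub_starProjection_mem_orthogonal (K := K) (u 0)) hw
    | succ n ih =>
      rw [herec n]
      exact Submodule.sub_mem _ ih (Submodule.smul_mem _ _ (hTmem _))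
  -- contraction step
  have hBpos : ∀ x : A, x ∈ Kᗮ → γ^2 * ‖x‖^2 ≤ ‖S x‖^2 := by
    intro x hx
    have h := hgamma_le x hx
    have h0 : 0 ≤ γ * ‖x‖ := mul_nonneg hγpos.le (norm_nonneg x)
    nlinarith [mul_le_mul h h h0 (norm_nonneg (S x))]
  have hcontr : ∀ e : A, e ∈ Kᗮ → ∀ l : ℝ, ε ≤ l → l ≤ 2 - ε →
      ‖e - l • (ContinuousLinearMap.adjoint S) (S e)‖ ≤ (1 - ε * γ^2) * ‖e‖ := by
    intro e he l hl1 hl2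
    obtain ⟨Te, hTe⟩ : ∃ T : A, T = (ContinuousLinearMap.adjoint S) (S e) := ⟨_, rfl⟩
    rw [← hTe]
    have hTee : ⟪Te, e⟫ = ‖S e‖^2 := by rw [hTe, hadj, real_inner_self_eq_norm_sq]
    obtain ⟨f, hf⟩ : ∃ f : A, f = Te - γ^2 • e := ⟨_, rfl⟩
    have hfF : f ∈ Kᗮ := by
      rw [hf, hTe]
      exact Submodule.sub_mem _ (hTmem _) (Submodule.smul_mem _ _ he)
    have hkey : ⟪S e, S f⟫ - γ^2 * ⟪e, f⟫ = ‖f‖^2 := by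
      have h1 : ⟪Te, f⟫ = ⟪S e, S f⟫ := by rw [hTe]; exact hadj (S e) f
      have h2 : ⟪γ^2 • e, f⟫ = γ^2 * ⟪e, f⟫ := real_inner_smul_left _ _ _
      have h3 : ⟪Te, f⟫ - ⟪γ^2 • e, f⟫ = ⟪f, f⟫ := by rw [← inner_sub_left, ← hf]
      rw [← h1, ← h2, h3, real_inner_self_eq_norm_sq]
    have hquad : ∀ r : ℝ, 0 ≤ (‖S f‖^2 - γ^2 * ‖f‖^2) * (r * r) + 2 * ‖f‖^2 * r
        + (‖S e‖^2 - γ^2 * ‖e‖^2) := by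
      intro r
      have hmem : e + r • f ∈ Kᗮ := Submodule.add_mem _ he (Submodule.smul_mem _ _ hfF)
      have h := hBpos _ hmem
      have e1 : ‖S (e + r • f)‖^2 = ‖S e‖^2 + 2 * (r * ⟪S e, S f⟫) + r^2 * ‖S f‖^2 := by
        rw [map_add, map_smul, norm_add_sq_real, real_inner_smul_right, norm_smul,
          Real.norm_eq_abs, mul_pow, sq_abs]
      have e2 : ‖e + r • f‖^2 = ‖e‖^2 + 2 * (r * ⟪e, f⟫) + r^2 * ‖f‖^2 := by
        rw [norm_add_sq_real, real_inner_smul_right, norm_smul,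
          Real.norm_eq_abs, mul_pow, sq_abs]
      rw [e1, e2] at h
      have hkey' : 2 * r * (⟪S e, S f⟫ - γ^2 * ⟪e, f⟫) = 2 * r * ‖f‖^2 := by rw [hkey]
      nlinarith [h, hkey']
    have hcs : (2 * ‖f‖^2)^2 - 4 * (‖S f‖^2 - γ^2 * ‖f‖^2) * (‖S e‖^2 - γ^2 * ‖e‖^2) ≤ 0 := by
      have h := discrim_le_zero hquad
      rwa [discrim] at h
    have hBee0 : 0 ≤ ‖S e‖^2 - γ^2 * ‖e‖^2 := by linarith [hBpos e he]
    have hf2 : ‖f‖^2 ≤ (1 - γ^2) * (‖S e‖^2 - γ^2 * ‖e‖^2) := by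
      have hBff : ‖S f‖^2 - γ^2 * ‖f‖^2 ≤ (1 - γ^2) * ‖f‖^2 := by
        nlinarith [hSle f, norm_nonneg f, norm_nonneg (S f)]
      by_cases h0 : ‖f‖ = 0
      · rw [h0]
        simpa using mul_nonneg (by linarith : (0:ℝ) ≤ 1 - γ^2) hBee0
      · have hfpos : 0 < ‖f‖^2 := by
          have h4 : 0 < ‖f‖ := lt_of_le_of_ne (norm_nonneg f) (Ne.symm h0)
          positivity
        nlinarith [hBpos f hfF]
    have hfeq : ‖f‖^2 = ‖Te‖^2 - 2 * (γ^2 * ‖S e‖^2) + (γ^2)^2 * ‖e‖^2 := by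
      rw [hf, norm_sub_sq_real, real_inner_smul_right, hTee, norm_smul,
        Real.norm_eq_abs, mul_pow, sq_abs]
    have hTT : ‖Te‖^2 ≤ (1 + γ^2) * ‖S e‖^2 - γ^2 * ‖e‖^2 := by nlinarith [hf2, hfeq]
    have hEt : ‖S e‖^2 ≤ ‖e‖^2 := by nlinarith [hSle e, norm_nonneg (S e), norm_nonneg e]
    have hinner : ⟪e, Te⟫ = ‖S e‖^2 := by rw [real_inner_comm]; exact hTee
    have hnormsq : ‖e - l • Te‖^2 = ‖e‖^2 - 2 * (l * ‖S e‖^2) + l^2 * ‖Te‖^2 := by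
      rw [norm_sub_sq_real, real_inner_smul_right, hinner, norm_smul,
        Real.norm_eq_abs, mul_pow, sq_abs]
    have hmain := aux_contr (‖e‖^2) (‖S e‖^2) (γ^2) l ε (‖Te‖^2) (by positivity)
      (by positivity) hγ2 (hBpos e he) hEt hl1 hl2 hε hTT
    have hc0 : 0 ≤ (1 - ε * γ^2) * ‖e‖ := mul_nonneg (by nlinarith) (norm_nonneg e)
    nlinarith [norm_nonneg (e - l • Te), hnormsq, hmain]
  have hq0 : 0 ≤ 1 - ε * γ^2 := by nlinarith
  have hbd : ∀ n : ℕ, ‖u n - L‖ ≤ (1 - ε * γ^2)^n * ‖u 0 - L‖ := by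
    intro n
    induction n with
    | zero => simp
    | succ n ih =>
      rw [herec n]
      calc ‖(u n - L) - lam n • (ContinuousLinearMap.adjoint S) (S (u n - L))‖
          ≤ (1 - ε * γ^2) * ‖u n - L‖ := hcontr _ (heF n) _ (hlam n).1 (hlam n).2
        _ ≤ (1 - ε * γ^2) * ((1 - ε * γ^2)^n * ‖u 0 - L‖) :=
            mul_le_mul_of_nonneg_left ih hq0
        _ = (1 - ε * γ^2)^(n+1) * ‖u 0 - L‖ := by ring
  refine ⟨?_, hbd⟩
  rw [tendsto_iff_norm_sub_tendsto_zero]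
  have hq1 : 1 - ε * γ^2 < 1 := by nlinarith [mul_pos hε (pow_pos hγpos 2)]
  have hlim : Filter.Tendsto (fun n : ℕ => (1 - ε * γ^2)^n * ‖u 0 - L‖)
      Filter.atTop (nhds 0) := by
    have h := (tendsto_pow_atTop_nhds_zero_of_lt_one hq0 hq1).mul_const ‖u 0 - L‖
    simpa using h
  exact squeeze_zero (fun n => norm_nonneg _) hbd hlim
end

section
/- Let H be a real Hilbert space, A a closed linear subspace with orthogonal projection P_A, and C a nonempty affine subspace of H with complete direction and nearest-point projection P_C; assume A ∩ C ≠ ∅. Define R u := P_A( 2 P_C u − u ). Then for every u ∈ A: R u = u if and only if u ∈ A ∩ C; that is, the fixed points of R in A are exactly A ∩ C. -/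
open RealInnerProductSpace


/-- For a closed subspace `A` and a nonempty affine subspace `C`
with complete direction such that `A ∩ C ≠ ∅`, the fixed points in `A` of
`R u := P_A (2 P_C u - u)` (projection onto `A` composed with the reflection
across `C`) are exactly the points of `A ∩ C`. -/
theorem fixed_points_of_projected_reflection
    {H : Type*} [NormedAddCommGroup H] [InnerProductSpace ℝ H] [CompleteSpace H]
    (A : Submodule ℝ H) [CompleteSpace A]
    (C : AffineSubspace ℝ H) [Nonempty C] [CompleteSpace C.direction]
    (hAC : ∃ a, a ∈ A ∧ a ∈ C) :
    ∀ u ∈ A,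
      ((A.orthogonalProjectionOnto
          ((2 : ℝ) • (EuclideanGeometry.orthogonalProjection C u : H) - u) : H) = u
        ↔ u ∈ A ∧ u ∈ C) := by
  intro u hu
  constructor
  · intro hfix
    refine ⟨hu, ?_⟩
    obtain ⟨a, haA, haC⟩ := hAC
    set p : H := (EuclideanGeometry.orthogonalProjection C u : H) with hp
    set w : H := (2 : ℝ) • p - u with hw
    -- w - u ∈ Aᗮ
    have hsub : w - (A.orthogonalProjectionOnto w : H) ∈ Aᗮ :=
      A.sub_starProjection_mem_orthogonal w
    rw [hfix] at hsub
    have hwu : w - u = (2 : ℝ) • (p - u) := by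
      simp [hw, smul_sub, two_smul]; abel
    have hpu : p - u ∈ Aᗮ := by
      have := Aᗮ.smul_mem (2⁻¹ : ℝ) (hwu ▸ hsub)
      simpa [smul_smul] using this
    -- u - p ⊥ C.direction
    have hperp : u - p ∈ C.directionᗮ := by
      have := EuclideanGeometry.vsub_orthogonalProjection_mem_direction_orthogonal C u
      simpa [vsub_eq_sub, hp] using this
    have hpC : p ∈ C := (EuclideanGeometry.orthogonalProjection C u).2
    have hpa : p - a ∈ C.direction := by
      have := AffineSubspace.vsub_mem_direction hpC haC
      simpa [vsub_eq_sub] using this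
    have h1 : ⟪p - u, p - a⟫ = 0 := by
      have := hperp (p - a) hpa
      have : ⟪u - p, p - a⟫ = 0 := by
        simpa [real_inner_comm] using this
      calc ⟪p - u, p - a⟫ = ⟪-(u - p), p - a⟫ := by rw [neg_sub]
        _ = -⟪u - p, p - a⟫ := inner_neg_left _ _
        _ = 0 := by rw [this]; ring
    have h2 : ⟪p - u, u - a⟫ = 0 := by
      have := hpu (u - a) (A.sub_mem hu haA)
      simpa [real_inner_comm] using this
    have hnorm : ⟪p - u, p - u⟫ = 0 := by
      have key : p - u = (p - a) - (u - a) := by abel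
      calc ⟪p - u, p - u⟫ = ⟪p - u, (p - a) - (u - a)⟫ := by rw [← key]
        _ = ⟪p - u, p - a⟫ - ⟪p - u, u - a⟫ := inner_sub_right _ _ _
        _ = 0 := by rw [h1, h2]; ring
    have : p = u := by
      have := inner_self_eq_zero.mp hnorm
      have : p - u = 0 := this
      linear_combination (norm := abel) this
    rwa [← this]
  · rintro ⟨huA, huC⟩
    have hp : (EuclideanGeometry.orthogonalProjection C u : H) = u := by
      exact_mod_cast EuclideanGeometry.orthogonalProjection_eq_self_iff.mpr huC
    rw [hp]
    have : (2 : ℝ) • u - u = u := by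
      rw [two_smul]; abel
    rw [this]
    exact_mod_cast A.starProjection_eq_self_iff.mpr huA
end
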